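/- Under the hypotheses on W, lim_{λ→∞} l(λ) = 0, where l(λ) = ∫₀^∞ ds/√(2(W(s+λ) − W(λ))). -/

import Mathlib

open MeasureTheory Set Filter

theorem blowup_length_tendsto_zero
    (W : ℝ → ℝ) (hW : ContDiff ℝ 2 W) (hWnn : ∀ t, 0 ≤ W t)
    (hWconv : ConvexOn ℝ Set.univ W) (hWvan : ∀ t, W t = 0 ↔ t = 0)
    (hWint : IntegrableOn (fun u => 1 / Real.sqrt (W u)) {u : ℝ | 1 < u}) :
    Tendsto (fun lam => ∫ s in Ioi (0:ℝ), 1 / Real.sqrt (2 * (W (s + lam) - W lam)))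
      atTop (nhds 0) := by
  have hWcont : Continuous W := hW.continuous
  have hW0 : W 0 = 0 := (hWvan 0).2 rfl
  have hWpos : ∀ t : ℝ, t ≠ 0 → 0 < W t := fun t ht =>
    lt_of_le_of_ne (hWnn t) (fun e => ht ((hWvan t).1 e.symm))
  -- monotonicity on nonnegatives
  have hmono : ∀ a b : ℝ, 0 ≤ a → a ≤ b → W a ≤ W b := by
    intro a b ha hab
    rcases eq_or_lt_of_le hab with rfl | hab
    · exact le_rfl
    rcases eq_or_lt_of_le ha with rfl | ha
    · rw [hW0]; exact hWnn b
    -- slope (0,a) ≤ slope (a,b), slope(0,a) ≥ 0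
    have hs := hWconv.slope_mono_adjacent (mem_univ (0:ℝ)) (mem_univ b) ha hab
    rw [hW0, sub_zero, sub_zero] at hs
    have h1 : 0 ≤ W a / a := div_nonneg (hWnn a) ha.le
    have h2 : 0 ≤ (W b - W a) / (b - a) := le_trans h1 hs
    have h3 : 0 ≤ (W b - W a) / (b - a) * (b - a) := mul_nonneg h2 (by linarith)
    rw [div_mul_cancel₀ _ (by linarith : b - a ≠ 0)] at h3
    linarith
  -- slope inequality
  have hslope : ∀ lam s : ℝ, 0 < lam → 0 < s →
      s * (W lam / lam) ≤ W (s + lam) - W lam := by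
    intro lam s hlam hs
    have h := hWconv.slope_mono_adjacent (mem_univ (0:ℝ)) (mem_univ (s + lam))
      hlam (by linarith)
    rw [hW0, sub_zero, sub_zero] at h
    have h' : (s + lam) - lam = s := by ring
    rw [h'] at h
    calc s * (W lam / lam) = (W lam / lam) * s := by ring
    _ ≤ ((W (s + lam) - W lam) / s) * s := by
        exact mul_le_mul_of_nonneg_right h hs.le
    _ = W (s + lam) - W lam := by field_simp
  -- half inequality
  have hhalf : ∀ lam s : ℝ, 0 < lam → lam ≤ s →
      W (s + lam) / 2 ≤ W (s + lam) - W lam := by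
    intro lam s hlam hls
    have h1 := hslope lam s hlam (lt_of_lt_of_le hlam hls)
    have h2 : W lam ≤ s * (W lam / lam) := by
      have e : lam * (W lam / lam) = W lam := by field_simp
      calc W lam = lam * (W lam / lam) := e.symm
      _ ≤ s * (W lam / lam) :=
          mul_le_mul_of_nonneg_right hls (div_nonneg (hWnn lam) hlam.le)
    linarith
  set h : ℝ → ℝ := fun u => 1 / Real.sqrt (W u) with hh
  have hInt : IntegrableOn h (Ioi 1) := hWint
  have hnn : ∀ u, 0 ≤ h u := fun u => by positivity
  have hIntOn : ∀ a : ℝ, 1 ≤ a → IntegrableOn h (Ioi a) := by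
    intro a ha
    exact hInt.mono_set (Ioi_subset_Ioi ha)
  set T : ℝ → ℝ := fun a => ∫ u in Ioi a, h u with hT
  have hTnn : ∀ a, 0 ≤ T a := fun a => integral_nonneg (fun u => hnn u)
  -- T tends to 0
  have hTtendsto : Tendsto T atTop (nhds 0) := by
    have hlim := intervalIntegral_tendsto_integral_Ioi 1 hInt tendsto_id
    have key : ∀ᶠ a : ℝ in atTop, (∫ u in Ioi 1, h u) - ∫ u in (1:ℝ)..a, h u = T a := by
      filter_upwards [eventually_ge_atTop (1:ℝ)] with a ha
      rw [intervalIntegral.integral_of_le ha]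
      have hsplit : Ioc (1:ℝ) a ∪ Ioi a = Ioi 1 := Ioc_union_Ioi_eq_Ioi ha
      rw [hT]
      rw [← hsplit, setIntegral_union (Ioc_disjoint_Ioi le_rfl) measurableSet_Ioi
        (hInt.mono_set (Ioc_subset_Ioi_self)) (hIntOn a ha)]
      ring
    have : Tendsto (fun a : ℝ => (∫ u in Ioi 1, h u) - ∫ u in (1:ℝ)..a, h u) atTop
        (nhds ((∫ u in Ioi 1, h u) - ∫ u in Ioi 1, h u)) := tendsto_const_nhds.sub hlim
    rw [sub_self] at this
    exact this.congr' key
  -- lower/upper bound for T over intervals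
  have hTlow : ∀ lam : ℝ, 2 ≤ lam → lam / Real.sqrt (W lam) ≤ 2 * T (lam / 2) := by
    intro lam hlam
    have hlam0 : 0 < lam := by linarith
    have hWlam : 0 < W lam := hWpos lam (by linarith)
    have h1 : Ioc (lam/2) lam ⊆ Ioi (lam/2) := Ioc_subset_Ioi_self
    have hint2 : IntegrableOn h (Ioi (lam/2)) := hIntOn _ (by linarith)
    have step1 : ∫ u in Ioc (lam/2) lam, (1 / Real.sqrt (W lam)) ≤
        ∫ u in Ioc (lam/2) lam, h u := by
      apply setIntegral_mono_on (integrableOn_const measure_Ioc_lt_top.ne)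
        (hint2.mono_set h1) measurableSet_Ioc
      intro u hu
      have hu0 : 0 ≤ u := by
        have := hu.1; simp only [mem_Ioc] at hu; linarith [hu.1]
      have : W u ≤ W lam := hmono u lam hu0 hu.2
      apply one_div_le_one_div_of_le
      · exact Real.sqrt_pos.2 (hWpos u (by intro e; rw [e] at hu; exact absurd hu.1 (by linarith)))
      · exact Real.sqrt_le_sqrt this
    have step2 : ∫ u in Ioc (lam/2) lam, h u ≤ T (lam/2) := by
      exact setIntegral_mono_set hint2 (Filter.Eventually.of_forall (fun u => hnn u))
        (HasSubset.Subset.eventuallyLE h1)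
    have hvol : (volume (Ioc (lam/2) lam)).toReal = lam / 2 := by
      rw [Real.volume_Ioc]; rw [ENNReal.toReal_ofReal (by linarith)]; ring
    have step0 : lam / 2 * (1 / Real.sqrt (W lam)) = ∫ u in Ioc (lam/2) lam, (1 / Real.sqrt (W lam)) := by
      rw [setIntegral_const, smul_eq_mul, measureReal_def, hvol]
    have : lam / 2 * (1 / Real.sqrt (W lam)) ≤ T (lam/2) := by
      rw [step0]; exact le_trans step1 step2
    calc lam / Real.sqrt (W lam) = 2 * (lam / 2 * (1 / Real.sqrt (W lam))) := by ring
    _ ≤ 2 * T (lam/2) := by linarith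
  -- the main eventual bound
  have hbound : ∀ᶠ lam : ℝ in atTop,
      (∫ s in Ioi (0:ℝ), 1 / Real.sqrt (2 * (W (s + lam) - W lam))) ≤
        Real.sqrt 2 * (2 * T (lam / 2)) + T (2 * lam) := by
    filter_upwards [eventually_ge_atTop (2:ℝ)] with lam hlam
    have hlam0 : 0 < lam := by linarith
    have hWlam : 0 < W lam := hWpos lam (by linarith)
    set c : ℝ := Real.sqrt (2 * W lam / lam) with hc
    have hcpos : 0 < c := Real.sqrt_pos.2 (by positivity)
    set g : ℝ → ℝ := fun s => if s ≤ lam then c⁻¹ * (Real.sqrt s)⁻¹ else h (s + lam) with hg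
    -- translation integrability
    have htrans : IntegrableOn (fun s => h (s + lam)) (Ioi lam) := by
      have hpre : (fun x : ℝ => x + lam) ⁻¹' (Ioi (lam + lam)) = Ioi lam := by
        ext x; simp [mem_preimage, mem_Ioi]
      have := (measurePreserving_add_right (volume : Measure ℝ) lam).integrableOn_comp_preimage
        (measurableEmbedding_addRight lam) (f := h) (s := Ioi (lam + lam))
      rw [hpre] at this
      exact this.2 (hIntOn (lam + lam) (by linarith))
    -- integrability of g on pieces
    have hgIoc : IntegrableOn g (Ioc 0 lam) := by
      apply IntegrableOn.congr_fun (f := fun s => c⁻¹ * (Real.sqrt s)⁻¹)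
      · apply Integrable.const_mul
        have : IntervalIntegrable (fun s : ℝ => s ^ (-(1/2) : ℝ)) volume 0 lam :=
          intervalIntegral.intervalIntegrable_rpow' (by norm_num)
        have h2 := (intervalIntegrable_iff_integrableOn_Ioc_of_le hlam0.le).1 this
        apply h2.congr_fun _ measurableSet_Ioc
        intro x hx
        show x ^ (-(1/2) : ℝ) = (Real.sqrt x)⁻¹
        rw [Real.rpow_neg (le_of_lt hx.1), Real.sqrt_eq_rpow]
      · intro x hx
        simp only [hg, if_pos hx.2]
      · exact measurableSet_Ioc
    have hgIoi : IntegrableOn g (Ioi lam) := by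
      apply htrans.congr_fun _ measurableSet_Ioi
      intro x hx
      simp only [hg, if_neg (not_le.2 (mem_Ioi.1 hx))]
    have hgInt : IntegrableOn g (Ioi 0) := by
      rw [← Ioc_union_Ioi_eq_Ioi hlam0.le]
      exact hgIoc.union hgIoi
    -- pointwise bound
    have hfg : ∀ s ∈ Ioi (0:ℝ), 1 / Real.sqrt (2 * (W (s + lam) - W lam)) ≤ g s := by
      intro s hs
      rw [mem_Ioi] at hs
      by_cases hsl : s ≤ lam
      · simp only [hg, if_pos hsl]
        have key : 2 * W lam / lam * s ≤ 2 * (W (s + lam) - W lam) := by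
          have := hslope lam s hlam0 hs
          have : 2 * (s * (W lam / lam)) ≤ 2 * (W (s + lam) - W lam) := by linarith
          calc 2 * W lam / lam * s = 2 * (s * (W lam / lam)) := by ring
          _ ≤ _ := this
        have hden : Real.sqrt (2 * W lam / lam * s) ≤ Real.sqrt (2 * (W (s + lam) - W lam)) :=
          Real.sqrt_le_sqrt key
        have hdpos : 0 < Real.sqrt (2 * W lam / lam * s) :=
          Real.sqrt_pos.2 (by positivity)
        rw [Real.sqrt_mul (by positivity) s] at hden hdpos
        rw [one_div]
        calc (Real.sqrt (2 * (W (s + lam) - W lam)))⁻¹ ≤ (c * Real.sqrt s)⁻¹ := by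
              apply inv_anti₀ hdpos hden
        _ = c⁻¹ * (Real.sqrt s)⁻¹ := by rw [mul_inv]
      · simp only [hg, if_neg hsl]
        push_neg at hsl
        have key : W (s + lam) ≤ 2 * (W (s + lam) - W lam) := by
          have := hhalf lam s hlam0 hsl.le
          linarith
        have hden : Real.sqrt (W (s + lam)) ≤ Real.sqrt (2 * (W (s + lam) - W lam)) :=
          Real.sqrt_le_sqrt key
        have hdpos : 0 < Real.sqrt (W (s + lam)) :=
          Real.sqrt_pos.2 (hWpos _ (by linarith))
        rw [hh]
        exact one_div_le_one_div_of_le hdpos hden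
    -- main estimate
    have main : (∫ s in Ioi (0:ℝ), 1 / Real.sqrt (2 * (W (s + lam) - W lam))) ≤
        ∫ s in Ioi (0:ℝ), g s := by
      apply integral_mono_of_nonneg
      · exact Filter.Eventually.of_forall (fun s => by positivity)
      · exact hgInt
      · rw [EventuallyLE, ae_restrict_iff' measurableSet_Ioi]
        exact Filter.Eventually.of_forall hfg
    -- split g integral
    have hsplit : (∫ s in Ioi (0:ℝ), g s) =
        (∫ s in Ioc (0:ℝ) lam, g s) + ∫ s in Ioi lam, g s := by
      rw [← Ioc_union_Ioi_eq_Ioi hlam0.le]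
      exact setIntegral_union (Ioc_disjoint_Ioi le_rfl) measurableSet_Ioi hgIoc hgIoi
    -- first piece value
    have hpiece1 : (∫ s in Ioc (0:ℝ) lam, g s) = c⁻¹ * (2 * Real.sqrt lam) := by
      have e1 : (∫ s in Ioc (0:ℝ) lam, g s) = ∫ s in Ioc (0:ℝ) lam, c⁻¹ * (Real.sqrt s)⁻¹ := by
        apply setIntegral_congr_fun measurableSet_Ioc
        intro x hx
        simp only [hg, if_pos hx.2]
      rw [e1, integral_const_mul]
      congr 1
      have e2 : (∫ s in Ioc (0:ℝ) lam, (Real.sqrt s)⁻¹) = ∫ s in (0:ℝ)..lam, s ^ (-(1/2) : ℝ) := by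
        rw [intervalIntegral.integral_of_le hlam0.le]
        apply setIntegral_congr_fun measurableSet_Ioc
        intro x hx
        show (Real.sqrt x)⁻¹ = x ^ (-(1/2) : ℝ)
        rw [Real.rpow_neg (le_of_lt hx.1), Real.sqrt_eq_rpow]
      rw [e2, integral_rpow (Or.inl (by norm_num))]
      have hz : (0:ℝ) ^ (-(1/2) + 1 : ℝ) = 0 := Real.zero_rpow (by norm_num)
      rw [hz, Real.sqrt_eq_rpow]
      norm_num
      ring
    -- first piece bound
    have hc1 : c⁻¹ * (2 * Real.sqrt lam) = Real.sqrt 2 * (lam / Real.sqrt (W lam)) := by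
      have hsl : (0:ℝ) < Real.sqrt lam := Real.sqrt_pos.2 hlam0
      have hsW : (0:ℝ) < Real.sqrt (W lam) := Real.sqrt_pos.2 hWlam
      have hs2 : (0:ℝ) < Real.sqrt 2 := by positivity
      have hce : c = Real.sqrt 2 * Real.sqrt (W lam) / Real.sqrt lam := by
        rw [hc, Real.sqrt_div (by positivity) lam, Real.sqrt_mul (by norm_num)]
      have h22 : Real.sqrt 2 * Real.sqrt 2 = 2 := Real.mul_self_sqrt (by norm_num)
      have hll : Real.sqrt lam * Real.sqrt lam = lam := Real.mul_self_sqrt hlam0.le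
      rw [hce]
      field_simp
      linear_combination 2 * hll - lam * h22
    have hpiece2 : (∫ s in Ioi lam, g s) = T (2 * lam) := by
      have e1 : (∫ s in Ioi lam, g s) = ∫ s in Ioi lam, h (s + lam) := by
        apply setIntegral_congr_fun measurableSet_Ioi
        intro x hx
        simp only [hg, if_neg (not_le.2 (mem_Ioi.1 hx))]
      rw [e1]
      have hpre : (fun x : ℝ => x + lam) ⁻¹' (Ioi (lam + lam)) = Ioi lam := by
        ext x; simp [mem_preimage, mem_Ioi]
      have := (measurePreserving_add_right (volume : Measure ℝ) lam).setIntegral_preimage_emb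
        (measurableEmbedding_addRight lam) h (Ioi (lam + lam))
      rw [hpre] at this
      rw [this, hT]
      norm_num
      congr 1
      ring
    calc (∫ s in Ioi (0:ℝ), 1 / Real.sqrt (2 * (W (s + lam) - W lam)))
        ≤ ∫ s in Ioi (0:ℝ), g s := main
    _ = (∫ s in Ioc (0:ℝ) lam, g s) + ∫ s in Ioi lam, g s := hsplit
    _ = Real.sqrt 2 * (lam / Real.sqrt (W lam)) + T (2 * lam) := by rw [hpiece1, hc1, hpiece2]
    _ ≤ Real.sqrt 2 * (2 * T (lam / 2)) + T (2 * lam) := by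
        have := hTlow lam hlam
        have hs2 : (0:ℝ) ≤ Real.sqrt 2 := Real.sqrt_nonneg 2
        nlinarith
  -- squeeze
  have hupper : Tendsto (fun lam : ℝ => Real.sqrt 2 * (2 * T (lam / 2)) + T (2 * lam)) atTop
      (nhds (Real.sqrt 2 * (2 * 0) + 0)) := by
    apply Tendsto.add
    · apply Tendsto.const_mul
      apply Tendsto.const_mul
      exact hTtendsto.comp (tendsto_id.atTop_div_const (by norm_num))
    · exact hTtendsto.comp (tendsto_id.const_mul_atTop (by norm_num))
  rw [show Real.sqrt 2 * (2 * 0) + 0 = 0 by ring] at hupper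
  apply tendsto_of_tendsto_of_tendsto_of_le_of_le' tendsto_const_nhds hupper
  · exact Filter.Eventually.of_forall (fun lam => integral_nonneg (fun s => by positivity))
  · exact hbound
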